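/- Let T be a union-closed α-tent for some cardinal α > 1 (i.e., T consists of α pairwise incomparable nonempty minimal sets together with one greatest set U_T containing them all, and T is closed under binary unions), and let F be any family of sets such that every nonempty member of F contains some member of T. Then F ∪ T has an abundant element: there exists x ∈ U_T and an injection from {A ∈ F ∪ T : x ∉ A} into {A ∈ F ∪ T : x ∈ A}. -/
import Mathlib

open Classical in
private lemma stmt_19_aux {α : Type*} (G : Set (Set α)) (x y : α) (U : Set α)
    (hU : U ∈ G) (hxU : x ∈ U) (hyU : y ∈ U)
    (hkey : ∀ S ∈ G, S.Nonempty → x ∈ S ∨ y ∈ S)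
    (hle : Cardinal.mk {S : Set α // S ∈ G ∧ x ∉ S} ≤
           Cardinal.mk {S : Set α // S ∈ G ∧ y ∉ S}) :
    ∃ f : {S : Set α // S ∈ G ∧ x ∉ S} → {S : Set α // S ∈ G ∧ x ∈ S},
      Function.Injective f := by
  obtain ⟨e⟩ := Cardinal.le_def _ _ |>.mp hle
  refine ⟨fun S => if h : (e S : Set α) = ∅ then ⟨U, hU, hxU⟩ else
    ⟨(e S : Set α), (e S).2.1, ?_⟩, ?_⟩
  · rcases hkey (e S : Set α) (e S).2.1 (Set.nonempty_iff_ne_empty.mpr h) with hx | hy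
    · exact hx
    · exact absurd hy (e S).2.2
  · intro S S' hSS'
    by_cases h : (e S : Set α) = ∅ <;> by_cases h' : (e S' : Set α) = ∅
    · exact e.injective (Subtype.ext (h.trans h'.symm))
    · simp only [dif_pos h, dif_neg h'] at hSS'
      have : (e S' : Set α) = U := (Subtype.ext_iff.mp hSS').symm
      exact absurd (this ▸ hyU) (e S').2.2
    · simp only [dif_neg h, dif_pos h'] at hSS'
      have : (e S : Set α) = U := Subtype.ext_iff.mp hSS'
      exact absurd (this ▸ hyU) (e S).2.2
    · simp only [dif_neg h, dif_neg h'] at hSS'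
      have hv := congrArg Subtype.val hSS'
      exact e.injective (Subtype.ext hv)

/-- Let `T` be a union-closed `α`-tent for some cardinal `α > 1`: `T` consists
of a set `M` of pairwise incomparable nonempty minimal sets (with `|M| > 1`)
together with a single greatest set `U` containing them all. If every nonempty
member of a family `F` contains some member of `T`, then `F ∪ T` has an
abundant element chosen from `U`. -/
theorem stmt_19 {α : Type*} (T F : Set (Set α)) (M : Set (Set α)) (U : Set α)
    (hT : T = insert U M)
    (hcard : 1 < Cardinal.mk M)
    (hmin : ∀ A ∈ M, A.Nonempty ∧ A ⊆ U ∧ A ≠ U)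
    (hanti : ∀ A ∈ M, ∀ B ∈ M, A ⊆ B → A = B)
    (hTUC : ∀ A ∈ T, ∀ B ∈ T, A ∪ B ∈ T)
    (hdom : ∀ A ∈ F, A.Nonempty → ∃ B ∈ T, B ⊆ A) :
    ∃ x ∈ U,
      ∃ f : {A : Set α // A ∈ F ∪ T ∧ x ∉ A} → {A : Set α // A ∈ F ∪ T ∧ x ∈ A},
        Function.Injective f := by
  -- two distinct minimal sets
  have : Nontrivial M := Cardinal.one_lt_iff_nontrivial.mp hcard
  obtain ⟨⟨A₁, hA₁⟩, ⟨A₂, hA₂⟩, hne⟩ := exists_pair_ne M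
  have hne' : A₁ ≠ A₂ := fun h => hne (Subtype.ext h)
  -- unions of distinct minimal sets equal U
  have hunion : ∀ A ∈ M, ∀ B ∈ M, A ≠ B → A ∪ B = U := by
    intro A hA B hB hAB
    have hmem : A ∪ B ∈ T := hTUC A (hT ▸ Set.mem_insert_of_mem U hA)
      B (hT ▸ Set.mem_insert_of_mem U hB)
    rw [hT] at hmem
    rcases hmem with h | h
    · exact h
    · exfalso
      have h1 : A = A ∪ B := hanti A hA (A ∪ B) h Set.subset_union_left
      have h2 : B = A ∪ B := hanti B hB (A ∪ B) h Set.subset_union_right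
      exact hAB (h1.trans h2.symm)
  have hU12 : A₁ ∪ A₂ = U := hunion A₁ hA₁ A₂ hA₂ hne'
  -- pick x ∈ A₂ \ A₁ and y ∈ A₁ \ A₂
  have hns1 : ¬ A₂ ⊆ A₁ := fun h => hne' (hanti A₂ hA₂ A₁ hA₁ h).symm
  have hns2 : ¬ A₁ ⊆ A₂ := fun h => hne' (hanti A₁ hA₁ A₂ hA₂ h)
  obtain ⟨x, hxA₂, hxA₁⟩ := Set.not_subset.mp hns1
  obtain ⟨y, hyA₁, hyA₂⟩ := Set.not_subset.mp hns2
  have hxU : x ∈ U := (hmin A₂ hA₂).2.1 hxA₂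
  have hyU : y ∈ U := (hmin A₁ hA₁).2.1 hyA₁
  have hUG : U ∈ F ∪ T := Or.inr (hT ▸ Set.mem_insert U M)
  -- every nonempty member of F ∪ T contains x or y
  have hM : ∀ S ∈ M, x ∈ S ∨ y ∈ S := by
    intro S hS
    by_cases h : S = A₁
    · exact Or.inr (h ▸ hyA₁)
    · left
      have hu : A₁ ∪ S = U := hunion A₁ hA₁ S hS (fun hh => h hh.symm)
      have : x ∈ A₁ ∪ S := hu ▸ hxU
      rcases this with h1 | h2
      · exact absurd h1 hxA₁
      · exact h2
  have hkey : ∀ S ∈ F ∪ T, S.Nonempty → x ∈ S ∨ y ∈ S := by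
    intro S hS hSne
    rcases hS with hSF | hST
    · obtain ⟨B, hBT, hBS⟩ := hdom S hSF hSne
      rw [hT] at hBT
      rcases hBT with h | h
      · exact Or.inl (hBS (h ▸ hxU))
      · rcases hM B h with h' | h'
        · exact Or.inl (hBS h')
        · exact Or.inr (hBS h')
    · rw [hT] at hST
      rcases hST with h | h
      · exact Or.inl (h ▸ hxU)
      · exact hM S h
  -- compare cardinalities and conclude
  rcases le_total (Cardinal.mk {S : Set α // S ∈ F ∪ T ∧ x ∉ S})
      (Cardinal.mk {S : Set α // S ∈ F ∪ T ∧ y ∉ S}) with hle | hle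
  · exact ⟨x, hxU, stmt_19_aux (F ∪ T) x y U hUG hxU hyU hkey hle⟩
  · exact ⟨y, hyU, stmt_19_aux (F ∪ T) y x U hUG hyU hxU
      (fun S hS hSne => (hkey S hS hSne).symm) hle⟩
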